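/- arXiv:math/0505250 — 5 statements merged into one kernel-verified Lean document; each statement's English description precedes it below -/
import Mathlib

section
/- Let S₁, S₂, S₃, … be a sequence of isometries on a Hilbert space H such that Sᵢ*Sⱼ = 0 for i ≠ j and Σᵢ SᵢSᵢ* = 1 (strong convergence). Fix n ≥ 1 and define Wᵢ = Σⱼ S_{i+jn} Sⱼ* (strong convergence) for i = 1, …, n. Then W₁, …, Wₙ are isometries with Wᵢ*Wⱼ = 0 for i ≠ j and Σᵢ₌₁ⁿ WᵢWᵢ* = 1. Moreover, each Wᵢ commutes with every operator of the form Σₖ Sₖ T Sₖ* for T ∈ B(H). -/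
open ContinuousLinearMap

noncomputable section

/-- The bijection `Fin n × ℕ ≃ ℕ`, `(i, j) ↦ i + j * n`. -/
def resEquiv (n : ℕ) (hn : 1 ≤ n) : Fin n × ℕ ≃ ℕ where
  toFun p := (p.1 : ℕ) + p.2 * n
  invFun m := (⟨m % n, Nat.mod_lt _ hn⟩, m / n)
  left_inv := by
    rintro ⟨i, j⟩
    have h1 : ((i : ℕ) + j * n) % n = (i : ℕ) := by
      rw [Nat.add_mul_mod_self_right, Nat.mod_eq_of_lt i.2]
    have h2 : ((i : ℕ) + j * n) / n = j := by
      rw [Nat.add_mul_div_right _ _ (by omega), Nat.div_eq_of_lt i.2, Nat.zero_add]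
    simp [h1, h2]
  right_inv m := by simp [Nat.mod_add_div']

set_option maxHeartbeats 1600000 in
/-- Given a sequence of isometries `Sᵢ` on a Hilbert space with pairwise
orthogonal ranges summing strongly to `1`, and `n ≥ 1`, the operators
`Wᵢ = Σⱼ S_{i+jn} Sⱼ*` (`i = 0, …, n-1`, strong convergence) form a finite family of
isometries with pairwise orthogonal ranges summing to `1`, each commuting with every
operator of the form `Σₖ Sₖ T Sₖ*`. -/
theorem stmt3 (H : Type*) [NormedAddCommGroup H] [InnerProductSpace ℂ H] [CompleteSpace H]
    (S : ℕ → H →L[ℂ] H)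
    (hiso : ∀ i, adjoint (S i) ∘L S i = 1)
    (horth : ∀ i j, i ≠ j → adjoint (S i) ∘L S j = 0)
    (hsum : ∀ ξ : H, HasSum (fun i => S i (adjoint (S i) ξ)) ξ)
    (n : ℕ) (hn : 1 ≤ n)
    (W : Fin n → H →L[ℂ] H)
    (hW : ∀ (i : Fin n) (ξ : H),
      HasSum (fun j : ℕ => S ((i : ℕ) + j * n) (adjoint (S j) ξ)) (W i ξ)) :
    (∀ i, adjoint (W i) ∘L W i = 1) ∧
    (∀ i j, i ≠ j → adjoint (W i) ∘L W j = 0) ∧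
    (∀ ξ : H, ∑ i : Fin n, W i (adjoint (W i) ξ) = ξ) ∧
    (∀ T B : H →L[ℂ] H,
      (∀ ξ : H, HasSum (fun k => S k (T (adjoint (S k) ξ))) (B ξ)) →
      ∀ i, W i ∘L B = B ∘L W i) := by
  -- arithmetic key
  have harith : ∀ (i l : Fin n) (j k : ℕ),
      (i : ℕ) + j * n = (l : ℕ) + k * n → i = l ∧ j = k := by
    intro i l j k h
    have h1 : ((i : ℕ) + j * n) % n = (i : ℕ) := by
      rw [Nat.add_mul_mod_self_right, Nat.mod_eq_of_lt i.2]
    have h2 : ((l : ℕ) + k * n) % n = (l : ℕ) := by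
      rw [Nat.add_mul_mod_self_right, Nat.mod_eq_of_lt l.2]
    have hil : (i : ℕ) = (l : ℕ) := by rw [← h1, ← h2, h]
    have hjk : j = k := by
      have := h
      rw [hil] at this
      have hjn : j * n = k * n := by omega
      exact Nat.eq_of_mul_eq_mul_right (by omega) hjn
    exact ⟨Fin.ext hil, hjk⟩
  -- inner ℂ products of range vectors
  have horthv : ∀ (a b : ℕ) (x y : H),
      (inner ℂ (S a x) (S b y) : ℂ) = if a = b then inner ℂ x y else 0 := by
    intro a b x y
    rw [← ContinuousLinearMap.adjoint_inner_right]
    by_cases hab : a = b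
    · subst hab
      have : adjoint (S a) (S a y) = y := by
        have := congrFun (congrArg DFunLike.coe (hiso a)) y
        simpa using this
      simp [this]
    · have : adjoint (S a) (S b y) = 0 := by
        have := congrFun (congrArg DFunLike.coe (horth a b hab)) y
        simpa using this
      simp [this, hab]
  -- W i ∘L S j = S (i + j*n)
  have hWS : ∀ (i : Fin n) (j : ℕ), W i ∘L S j = S ((i : ℕ) + j * n) := by
    intro i j
    ext ζ
    have h := hW i (S j ζ)
    have h2 : (fun k : ℕ => S ((i : ℕ) + k * n) (adjoint (S k) (S j ζ)))
        = fun k : ℕ => if k = j then S ((i : ℕ) + j * n) ζ else 0 := by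
      funext k
      by_cases hk : k = j
      · subst hk
        have : adjoint (S k) (S k ζ) = ζ := by
          have := congrFun (congrArg DFunLike.coe (hiso k)) ζ
          simpa using this
        simp [this]
      · have : adjoint (S k) (S j ζ) = 0 := by
          have := congrFun (congrArg DFunLike.coe (horth k j hk)) ζ
          simpa using this
        simp [this, hk]
    rw [h2] at h
    have h3 : HasSum (fun k : ℕ => if k = j then S ((i : ℕ) + j * n) ζ else 0)
        (S ((i : ℕ) + j * n) ζ) := hasSum_ite_eq j _
    simpa using h.unique h3
  -- key inner ℂ product formula
  have hinner : ∀ (i l : Fin n) (ξ η : H),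
      (inner ℂ (W i ξ) (W l η) : ℂ) = if i = l then inner ℂ ξ η else 0 := by
    intro i l ξ η
    have hk : ∀ k : ℕ, (inner ℂ (W i ξ) (S ((l : ℕ) + k * n) (adjoint (S k) η)) : ℂ)
        = if i = l then inner ℂ (adjoint (S k) ξ) (adjoint (S k) η) else 0 := by
      intro k
      set z := S ((l : ℕ) + k * n) (adjoint (S k) η) with hz
      have h := (innerSL ℂ z).hasSum (hW i ξ)
      have h2 : (fun j : ℕ => innerSL ℂ z (S ((i : ℕ) + j * n) (adjoint (S j) ξ)))
          = fun j : ℕ => if i = l ∧ j = k then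
              (inner ℂ (adjoint (S k) η) (adjoint (S k) ξ) : ℂ) else 0 := by
        funext j
        simp only [innerSL_apply_apply, hz, horthv]
        by_cases hc : (l : ℕ) + k * n = (i : ℕ) + j * n
        · obtain ⟨hil, hkj⟩ := harith l i k j hc
          simp [hc, hil.symm, hkj.symm]
        · have : ¬(i = l ∧ j = k) := by
            rintro ⟨rfl, rfl⟩; exact hc rfl
          simp [hc, this]
      rw [h2] at h
      by_cases hil : i = l
      · have h3 : HasSum (fun j : ℕ => if i = l ∧ j = k then
            (inner ℂ (adjoint (S k) η) (adjoint (S k) ξ) : ℂ) else 0)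
            (inner ℂ (adjoint (S k) η) (adjoint (S k) ξ) : ℂ) := by
          simp only [hil, true_and]
          exact hasSum_ite_eq k _
        have h4 := h.unique h3
        calc (inner ℂ (W i ξ) z : ℂ) = starRingEnd ℂ (inner ℂ z (W i ξ)) := by
              rw [inner_conj_symm]
          _ = starRingEnd ℂ (inner ℂ (adjoint (S k) η) (adjoint (S k) ξ) : ℂ) := by
              rw [← h4]; rfl
          _ = inner ℂ (adjoint (S k) ξ) (adjoint (S k) η) := by rw [inner_conj_symm]
          _ = _ := by simp [hil]
      · have h3 : HasSum (fun j : ℕ => if i = l ∧ j = k then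
            (inner ℂ (adjoint (S k) η) (adjoint (S k) ξ) : ℂ) else 0) 0 := by
          simp only [hil, false_and, if_false]
          exact hasSum_zero
        have h4 := h.unique h3
        calc (inner ℂ (W i ξ) z : ℂ) = starRingEnd ℂ (inner ℂ z (W i ξ)) := by
              rw [inner_conj_symm]
          _ = starRingEnd ℂ 0 := by rw [← h4]; rfl
          _ = _ := by simp [hil]
    have h := (innerSL ℂ (W i ξ)).hasSum (hW l η)
    have h2 : (fun k : ℕ => innerSL ℂ (W i ξ) (S ((l : ℕ) + k * n) (adjoint (S k) η)))
        = fun k : ℕ => if i = l then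
            (inner ℂ (adjoint (S k) ξ) (adjoint (S k) η) : ℂ) else 0 := by
      funext k; exact hk k
    rw [h2] at h
    by_cases hil : i = l
    · simp only [hil, if_true] at h ⊢
      have h3 := (innerSL ℂ ξ).hasSum (hsum η)
      have h4 : (fun k : ℕ => innerSL ℂ ξ (S k (adjoint (S k) η)))
          = fun k : ℕ => (inner ℂ (adjoint (S k) ξ) (adjoint (S k) η) : ℂ) := by
        funext k
        simp only [innerSL_apply_apply]
        rw [← ContinuousLinearMap.adjoint_inner_left]
      rw [h4] at h3
      exact h.unique h3
    · simp only [hil, if_false] at h ⊢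
      exact h.unique hasSum_zero
  -- parts 1 and 2
  have hWW : ∀ i l : Fin n, adjoint (W i) ∘L W l = if i = l then 1 else 0 := by
    intro i l
    ext ξ
    apply ext_inner_left ℂ
    intro v
    rw [ContinuousLinearMap.comp_apply, ContinuousLinearMap.adjoint_inner_right, hinner]
    by_cases hil : i = l <;> simp [hil]
  refine ⟨fun i => by simpa using hWW i i, fun i j hij => by simpa [hij] using hWW i j, ?_, ?_⟩
  · -- part 3
    intro ξ
    have hadjWS : ∀ (i : Fin n) (j : ℕ),
        adjoint (S j) ∘L adjoint (W i) = adjoint (S ((i : ℕ) + j * n)) := by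
      intro i j
      rw [← ContinuousLinearMap.adjoint_comp, hWS]
    have hfiber : ∀ i : Fin n,
        HasSum (fun j : ℕ => S ((i : ℕ) + j * n) (adjoint (S ((i : ℕ) + j * n)) ξ))
          (W i (adjoint (W i) ξ)) := by
      intro i
      have h := hW i (adjoint (W i) ξ)
      have h2 : (fun j : ℕ => S ((i : ℕ) + j * n) (adjoint (S j) (adjoint (W i) ξ)))
          = fun j : ℕ => S ((i : ℕ) + j * n) (adjoint (S ((i : ℕ) + j * n)) ξ) := by
        funext j
        congr 1
        have := congrFun (congrArg DFunLike.coe (hadjWS i j)) ξ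
        simpa using this
      rwa [h2] at h
    have hsum' : HasSum (fun p : Fin n × ℕ =>
        S ((p.1 : ℕ) + p.2 * n) (adjoint (S ((p.1 : ℕ) + p.2 * n)) ξ)) ξ := by
      have h := ((resEquiv n hn).hasSum_iff
        (f := fun m : ℕ => S m (adjoint (S m) ξ)) (a := ξ)).mpr (hsum ξ)
      simpa [resEquiv, Function.comp_def] using h
    have hG : HasSum (fun i : Fin n => W i (adjoint (W i) ξ)) ξ :=
      HasSum.prod_fiberwise hsum' (fun i => hfiber i)
    exact (hasSum_fintype _).unique hG
  · -- part 4
    intro T B hB i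
    have hBS : ∀ j : ℕ, B ∘L S j = S j ∘L T := by
      intro j
      ext ζ
      have h := hB (S j ζ)
      have h2 : (fun k : ℕ => S k (T (adjoint (S k) (S j ζ))))
          = fun k : ℕ => if k = j then S j (T ζ) else 0 := by
        funext k
        by_cases hk : k = j
        · subst hk
          have : adjoint (S k) (S k ζ) = ζ := by
            have := congrFun (congrArg DFunLike.coe (hiso k)) ζ
            simpa using this
          simp [this]
        · have : adjoint (S k) (S j ζ) = 0 := by
            have := congrFun (congrArg DFunLike.coe (horth k j hk)) ζ
            simpa using this
          simp [this, hk]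
      rw [h2] at h
      have h3 : HasSum (fun k : ℕ => if k = j then S j (T ζ) else 0) (S j (T ζ)) :=
        hasSum_ite_eq j _
      simpa using h.unique h3
    -- extensionality via the strong sum
    have hext : ∀ A₁ A₂ : H →L[ℂ] H, (∀ j : ℕ, A₁ ∘L S j = A₂ ∘L S j) → A₁ = A₂ := by
      intro A₁ A₂ hA
      ext ξ
      have h1 := A₁.hasSum (hsum ξ)
      have h2 := A₂.hasSum (hsum ξ)
      have heq : (fun m : ℕ => A₁ (S m (adjoint (S m) ξ)))
          = fun m : ℕ => A₂ (S m (adjoint (S m) ξ)) := by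
        funext m
        have := congrFun (congrArg DFunLike.coe (hA m)) (adjoint (S m) ξ)
        simpa using this
      rw [heq] at h1
      exact h1.unique h2
    apply hext
    intro j
    calc (W i ∘L B) ∘L S j = W i ∘L (B ∘L S j) := by rw [ContinuousLinearMap.comp_assoc]
      _ = W i ∘L (S j ∘L T) := by rw [hBS]
      _ = (W i ∘L S j) ∘L T := by rw [ContinuousLinearMap.comp_assoc]
      _ = S ((i : ℕ) + j * n) ∘L T := by rw [hWS]
      _ = B ∘L S ((i : ℕ) + j * n) := (hBS _).symm
      _ = B ∘L (W i ∘L S j) := by rw [hWS]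
      _ = (B ∘L W i) ∘L S j := by rw [ContinuousLinearMap.comp_assoc]
end
end

section
/- Let Y be a compact metric space with trivial reduced K-theory (K̃⁰(Y) = 0) and with Ext(K¹(Y), ℤ) = 0, and let X be a compact metric space with a continuous surjection f : X → Y. Then the induced map f₊ : K₀(X) → K₀(Y) on K-homology is surjective. -/
open Finsupp

theorem free_int_transfer (A : Type) [AddCommGroup A] (i1 i2 : Module ℤ A)
    (h : @Module.Free ℤ A _ _ i1) : @Module.Free ℤ A _ _ i2 := by
  have : i1 = i2 := by
    have u := AddCommGroup.uniqueIntModule (M := A)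
    exact (u.2 i1).trans (u.2 i2).symm
  rw [← this]; exact h

theorem free_of_inj (I : Type) [LinearOrder I] [WellFoundedLT I]
    (A : Type) [AddCommGroup A] [Module ℤ A] (T : A →ₗ[ℤ] (I →₀ ℤ))
    (hT : Function.Injective T) : Module.Free ℤ A := by
  set N : Submodule ℤ (I →₀ ℤ) := LinearMap.range T with hN
  classical
  set U : I → Submodule ℤ (I →₀ ℤ) := fun i => N ⊓ Finsupp.supported ℤ ℤ {j | j ≤ i} with hU
  set S : I → Submodule ℤ ℤ := fun i => (U i).map (Finsupp.lapply i) with hS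
  set d : I → ℤ := fun i => Submodule.IsPrincipal.generator (S i) with hd
  have hgen : ∀ i, d i ∈ S i := fun i => Submodule.IsPrincipal.generator_mem (S i)
  have he : ∀ i, ∃ x, x ∈ U i ∧ x i = d i := by
    intro i
    rcases Submodule.mem_map.1 (hgen i) with ⟨x, hx, hxi⟩
    exact ⟨x, hx, hxi⟩
  choose e heU heV using he
  have heN : ∀ i, e i ∈ N := fun i => (heU i).1
  have heSupp : ∀ i, ∀ k ∈ (e i).support, k ≤ i := by
    intro i k hk
    exact (Finsupp.mem_supported ℤ (e i)).1 (heU i).2 hk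
  have heHigh : ∀ i k, i < k → e i k = 0 := by
    intro i k hik
    by_contra h
    exact absurd (heSupp i k (Finsupp.mem_support_iff.2 h)) (not_le.2 hik)
  set J := {i : I // d i ≠ 0} with hJ
  set v : J → (I →₀ ℤ) := fun j => e j.1 with hv
  -- linear independence
  have hli : LinearIndependent ℤ v := by
    rw [linearIndependent_iff']
    intro s g hsum j hj
    by_contra hgj
    set t := s.filter (fun j => g j ≠ 0) with ht
    have htne : t.Nonempty := ⟨j, Finset.mem_filter.2 ⟨hj, hgj⟩⟩
    set m := t.max' htne with hm
    have hmt : m ∈ t := t.max'_mem htne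
    have hmS : m ∈ s := (Finset.mem_filter.1 hmt).1
    have hgm : g m ≠ 0 := (Finset.mem_filter.1 hmt).2
    have := congrArg (fun z : I →₀ ℤ => z m.1) hsum
    simp only [Finsupp.finset_sum_apply, Finsupp.smul_apply, Finsupp.coe_zero, Pi.zero_apply,
      smul_eq_mul] at this
    rw [Finset.sum_eq_single m] at this
    · rw [hv] at this
      simp only [heV] at this
      exact hgm ((mul_eq_zero.1 this).resolve_right m.2)
    · intro b hb hbm
      by_cases hgb : g b = 0
      · simp [hgb]
      · have hbt : b ∈ t := Finset.mem_filter.2 ⟨hb, hgb⟩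
        have hble : b ≤ m := t.le_max' b hbt
        have hblt : b < m := lt_of_le_of_ne hble hbm
        have : b.1 < m.1 := hblt
        rw [hv, heHigh b.1 m.1 this, mul_zero]
    · intro h; exact absurd hmS h
  -- spanning
  have main : ∀ i, ∀ x, x ∈ U i → x ∈ Submodule.span ℤ (Set.range v) := by
    intro i
    induction i using WellFoundedLT.induction with
    | _ i IH =>
      intro x hx
      by_cases hx0 : x = 0
      · simp [hx0]
      · have hsn : x.support.Nonempty := Finsupp.support_nonempty_iff.2 hx0
        set m := x.support.max' hsn with hm
        have hxm : x ∈ U m := by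
          refine ⟨hx.1, (Finsupp.mem_supported ℤ x).2 ?_⟩
          intro k hk
          exact x.support.le_max' k hk
        have hxmS : x m ∈ S m := ⟨x, hxm, rfl⟩
        rcases (Submodule.IsPrincipal.mem_iff_eq_smul_generator (S m)).1 hxmS with ⟨c, hc⟩
        have hxmne : x m ≠ 0 := Finsupp.mem_support_iff.1 (x.support.max'_mem hsn)
        have hdm : d m ≠ 0 := by
          intro h
          apply hxmne
          rw [hc, show Submodule.IsPrincipal.generator (S m) = d m from rfl, h, smul_zero]
        set y := x - c • e m with hy
        have hyN : y ∈ N := N.sub_mem hx.1 (N.smul_mem c (heN m))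
        have hym : y m = 0 := by
          simp [hy, hc, heV m, smul_eq_mul, mul_comm]
          exact sub_self _
        have hySupp : ∀ k ∈ y.support, k < m := by
          intro k hk
          have hkne : y k ≠ 0 := Finsupp.mem_support_iff.1 hk
          have hkm : k ≠ m := fun h => hkne (h ▸ hym)
          have hkle : k ≤ m := by
            have : y k = x k - c * e m k := by simp [hy, smul_eq_mul]
            by_contra hgt
            push_neg at hgt
            have h1 : x k = 0 := by
              by_contra h1
              have := x.support.le_max' k (Finsupp.mem_support_iff.2 h1)
              exact absurd this (not_le.2 hgt)
            have h2 : e m k = 0 := heHigh m k hgt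
            apply hkne; rw [this, h1, h2, mul_zero, sub_zero]
          exact lt_of_le_of_ne hkle hkm
        have hmem : e m ∈ Submodule.span ℤ (Set.range v) :=
          Submodule.subset_span ⟨⟨m, hdm⟩, rfl⟩
        have hxy : x = y + c • e m := by rw [hy]; abel
        by_cases hy0 : y = 0
        · rw [hxy, hy0, zero_add]
          exact Submodule.smul_mem _ c hmem
        · have hysn : y.support.Nonempty := Finsupp.support_nonempty_iff.2 hy0
          set m' := y.support.max' hysn with hm'
          have hm'lt : m' < m := hySupp m' (y.support.max'_mem hysn)
          have hmle : m ≤ i := by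
            have := hx.2
            exact (Finsupp.mem_supported ℤ x).1 this (x.support.max'_mem hsn)
          have hm'i : m' < i := lt_of_lt_of_le hm'lt hmle
          have hyU : y ∈ U m' := by
            refine ⟨hyN, (Finsupp.mem_supported ℤ y).2 ?_⟩
            intro k hk
            exact y.support.le_max' k hk
          have hyspan := IH m' hm'i y hyU
          rw [hxy]
          exact Submodule.add_mem _ hyspan (Submodule.smul_mem _ c hmem)
  -- assemble basis of N
  set vN : J → ↥N := fun j => ⟨e j.1, heN j.1⟩ with hvN
  have hliN : LinearIndependent ℤ vN := by
    have hcomp : N.subtype ∘ vN = v := rfl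
    exact LinearIndependent.of_comp N.subtype (by rw [hcomp]; exact hli)
  have hspanN : ⊤ ≤ Submodule.span ℤ (Set.range vN) := by
    rintro ⟨x, hx⟩ -
    have hxspan : x ∈ Submodule.span ℤ (Set.range v) := by
      by_cases hx0 : x = 0
      · simp [hx0]
      · have hsn : x.support.Nonempty := Finsupp.support_nonempty_iff.2 hx0
        refine main (x.support.max' hsn) x ⟨hx, (Finsupp.mem_supported ℤ x).2 ?_⟩
        intro k hk
        exact x.support.le_max' k hk
    rcases mem_span_range_iff_exists_finsupp.1 hxspan with ⟨c, hc⟩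
    refine mem_span_range_iff_exists_finsupp.2 ⟨c, ?_⟩
    apply Subtype.ext
    have : (N.subtype) (c.sum fun j a => a • vN j) = c.sum fun j a => a • v j := by
      rw [map_finsuppSum]
      rfl
    exact this.trans hc
  have hfree : Module.Free ℤ ↥N := Module.Free.of_basis (Module.Basis.mk hliN hspanN)
  exact Module.Free.of_equiv' (free_int_transfer _ _ _ hfree) (LinearEquiv.ofInjective T hT).symm

theorem free_submodule_of_free (M : Type) [AddCommGroup M] [Module ℤ M] [Module.Free ℤ M]
    (N : Submodule ℤ M) : Module.Free ℤ ↥N := by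
  classical
  set I := Module.Free.ChooseBasisIndex ℤ M with hI
  let b : Module.Basis I ℤ M := Module.Free.chooseBasis ℤ M
  letI : LinearOrder I := IsWellOrder.linearOrder WellOrderingRel
  haveI : WellFoundedLT I := ⟨IsWellFounded.wf (r := WellOrderingRel)⟩
  exact free_int_transfer _ _ _ (@free_of_inj I _ _ ↥N _ N.module (b.repr.toLinearMap ∘ₗ N.subtype)
    (b.repr.injective.comp N.injective_subtype))

theorem extend_hom {X Y : Type} [MetricSpace X] [CompactSpace X] [MetricSpace Y] [CompactSpace Y]
    (f : C(X, Y)) (hf : Function.Surjective f) (φ : C(Y, ℤ) →+ ℤ) :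
    ∃ Φ : C(X, ℤ) →+ ℤ, ∀ h : C(Y, ℤ), Φ (h.comp f) = φ h := by
  classical
  let P : Set (X × X) := {p | f p.1 = f p.2}
  have hPclosed : IsClosed P :=
    isClosed_eq (f.continuous.comp continuous_fst) (f.continuous.comp continuous_snd)
  haveI : CompactSpace P := isCompact_iff_compactSpace.1 hPclosed.isCompact
  haveI : CompactSpace (ConnectedComponents P) := Quotient.compactSpace
  haveI : Module.Free ℤ (LocallyConstant (ConnectedComponents P) ℤ) :=
    LocallyConstant.freeOfProfinite (Profinite.of (ConnectedComponents P))
  have hdiff : ∀ g : C(X, ℤ), Continuous (fun p : P => g p.1.1 - g p.1.2) := by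
    intro g
    exact (g.continuous.comp (continuous_fst.comp continuous_subtype_val)).sub
      (g.continuous.comp (continuous_snd.comp continuous_subtype_val))
  let Δ0 : C(X, ℤ) → LocallyConstant (ConnectedComponents P) ℤ := fun g =>
    ⟨(hdiff g).connectedComponentsLift,
      (IsLocallyConstant.iff_continuous _).2 ((hdiff g).connectedComponentsLift_continuous)⟩
  have hΔ0coe : ∀ (g : C(X, ℤ)) (p : P), Δ0 g (ConnectedComponents.mk p) = g p.1.1 - g p.1.2 :=
    fun g p => rfl
  have hΔ0add : ∀ g₁ g₂, Δ0 (g₁ + g₂) = Δ0 g₁ + Δ0 g₂ := by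
    intro g₁ g₂
    apply LocallyConstant.ext
    intro z
    obtain ⟨p, rfl⟩ := ConnectedComponents.surjective_coe z
    show Δ0 (g₁ + g₂) (ConnectedComponents.mk p) =
      Δ0 g₁ (ConnectedComponents.mk p) + Δ0 g₂ (ConnectedComponents.mk p)
    rw [hΔ0coe, hΔ0coe, hΔ0coe]
    simp only [ContinuousMap.add_apply]
    ring
  let Δ : C(X, ℤ) →ₗ[ℤ] LocallyConstant (ConnectedComponents P) ℤ :=
    (AddMonoidHom.mk' Δ0 hΔ0add).toIntLinearMap
  have hjadd : ∀ h₁ h₂ : C(Y, ℤ), (h₁ + h₂).comp f = h₁.comp f + h₂.comp f :=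
    fun h₁ h₂ => ContinuousMap.add_comp h₁ h₂ f
  let jlin : C(Y, ℤ) →ₗ[ℤ] C(X, ℤ) :=
    (AddMonoidHom.mk' (fun h : C(Y, ℤ) => h.comp f) hjadd).toIntLinearMap
  have hjapp : ∀ h : C(Y, ℤ), jlin h = h.comp f := fun _ => rfl
  have hjinj : Function.Injective jlin := by
    intro h₁ h₂ hh
    ext y
    obtain ⟨x, rfl⟩ := hf y
    exact DFunLike.congr_fun hh x
  have hquot : Topology.IsQuotientMap f :=
    (f.continuous.isClosedMap).isQuotientMap f.continuous hf
  have hker : LinearMap.ker Δ = LinearMap.range jlin := by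
    apply le_antisymm
    · intro g hg
      rw [LinearMap.mem_ker] at hg
      have hfib : ∀ p : P, g p.1.1 = g p.1.2 := by
        intro p
        have h1 : Δ0 g (ConnectedComponents.mk p) = 0 := by
          rw [show Δ0 g = Δ g from rfl, hg]; rfl
        rw [hΔ0coe] at h1
        exact sub_eq_zero.1 h1
      let h0 : Y → ℤ := fun y => g (hf y).choose
      have hcomp : h0 ∘ f = g := by
        funext x
        exact hfib ⟨((hf (f x)).choose, x), (hf (f x)).choose_spec⟩
      have hcont : Continuous h0 := hquot.continuous_iff.2 (hcomp ▸ g.continuous)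
      exact ⟨⟨h0, hcont⟩, ContinuousMap.ext fun x => congrFun hcomp x⟩
    · rintro _ ⟨h, rfl⟩
      rw [LinearMap.mem_ker]
      apply LocallyConstant.ext
      intro z
      obtain ⟨p, rfl⟩ := ConnectedComponents.surjective_coe z
      show Δ0 (jlin h) (ConnectedComponents.mk p) = 0
      rw [hjapp, hΔ0coe]
      simp only [ContinuousMap.comp_apply]
      rw [p.2, sub_self]
  haveI hQfree : Module.Free ℤ (C(X, ℤ) ⧸ LinearMap.ker Δ) :=
    Module.Free.of_equiv' (free_submodule_of_free _ (LinearMap.range Δ))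
      (LinearMap.quotKerEquivRange Δ).symm
  obtain ⟨σ, hσ⟩ := Module.projective_lifting_property (LinearMap.ker Δ).mkQ LinearMap.id
    (Submodule.mkQ_surjective _)
  let ρ : C(X, ℤ) →ₗ[ℤ] C(X, ℤ) := LinearMap.id - σ ∘ₗ (LinearMap.ker Δ).mkQ
  have hρmem : ∀ g, ρ g ∈ LinearMap.range jlin := by
    intro g
    rw [← hker]
    have : (LinearMap.ker Δ).mkQ (ρ g) = 0 := by
      have hσ' := LinearMap.congr_fun hσ ((LinearMap.ker Δ).mkQ g)
      simp only [LinearMap.comp_apply, LinearMap.id_apply] at hσ'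
      simp only [ρ, LinearMap.sub_apply, LinearMap.id_apply, LinearMap.comp_apply, map_sub, hσ',
        sub_self]
    rwa [Submodule.mkQ_apply, Submodule.Quotient.mk_eq_zero] at this
  have hρj : ∀ h : C(Y, ℤ), ρ (jlin h) = jlin h := by
    intro h
    have hmem : jlin h ∈ LinearMap.ker Δ := by
      rw [hker]; exact ⟨h, rfl⟩
    have : (LinearMap.ker Δ).mkQ (jlin h) = 0 := by
      rwa [Submodule.mkQ_apply, Submodule.Quotient.mk_eq_zero]
    simp only [ρ, LinearMap.sub_apply, LinearMap.id_apply, LinearMap.comp_apply, this, map_zero,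
      sub_zero]
  let eJ : C(Y, ℤ) ≃ₗ[ℤ] ↥(LinearMap.range jlin) := LinearEquiv.ofInjective jlin hjinj
  let Φ0 : C(X, ℤ) → ℤ := fun g => φ (eJ.symm ⟨ρ g, hρmem g⟩)
  have hΦadd : ∀ g₁ g₂, Φ0 (g₁ + g₂) = Φ0 g₁ + Φ0 g₂ := by
    intro g₁ g₂
    show φ (eJ.symm ⟨ρ (g₁ + g₂), _⟩) = φ (eJ.symm ⟨ρ g₁, _⟩) + φ (eJ.symm ⟨ρ g₂, _⟩)
    rw [← map_add, ← map_add]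
    congr 1
    congr 1
    apply Subtype.ext
    simp [map_add]
  refine ⟨AddMonoidHom.mk' Φ0 hΦadd, ?_⟩
  intro h
  show φ (eJ.symm ⟨ρ (jlin h), hρmem (jlin h)⟩) = φ h
  congr 1
  have : (⟨ρ (jlin h), hρmem (jlin h)⟩ : ↥(LinearMap.range jlin)) = eJ h := by
    apply Subtype.ext
    rw [LinearEquiv.ofInjective_apply]
    exact hρj h
  rw [this, LinearEquiv.symm_apply_apply]



/-- `Ext(G, ℤ) = 0` for an abelian group `G`: every extension of `G` by `ℤ` splits,
i.e. every surjection onto `G` with kernel a copy of `ℤ` admits a section. -/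
def HasTrivialExtZ (G : Type) [AddCommGroup G] : Prop :=
  ∀ (E : Type) [AddCommGroup E], ∀ (i : ℤ →+ E) (p : E →+ G),
    Function.Injective i → Function.Surjective p →
    (∀ e : E, p e = 0 ↔ e ∈ i.range) →
    ∃ s : G →+ E, p.comp s = AddMonoidHom.id G

/-- Let `f : X → Y` be a continuous surjection of compact metric spaces.
The K-homology groups `KhX = K₀(X)`, `KhY = K₀(Y)`, the K-theory groups
`KtX = K⁰(X)`, `KtY = K⁰(Y)` and `K1Y = K¹(Y)` are given abstractly, together with
the induced maps `fKh`, `fKt`, the index pairings `γX`, `γY` (natural with respect to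
`f`), the Rosenberg–Schochet UCT facts (`γX` surjective; `γY` bijective provided
`Ext(K¹(Y), ℤ) = 0`), the rank decomposition of `K⁰(X)` with summand `C(X, ℤ)`, and
its compatibility with `f`.  Hypotheses: `Ext(K¹(Y), ℤ) = 0` and `Y` has trivial
reduced K-theory, i.e. `rankY : K⁰(Y) ≃ C(Y, ℤ)`.  Conclusion: `f₊ : K₀(X) → K₀(Y)`
is surjective. -/
theorem stmt6 (X Y : Type) [MetricSpace X] [CompactSpace X] [MetricSpace Y] [CompactSpace Y]
    (f : C(X, Y)) (hf : Function.Surjective f)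
    (KhX KhY KtX KtY K1Y : Type)
    [AddCommGroup KhX] [AddCommGroup KhY] [AddCommGroup KtX] [AddCommGroup KtY]
    [AddCommGroup K1Y]
    (fKh : KhX →+ KhY) (fKt : KtY →+ KtX)
    (γX : KhX →+ KtX →+ ℤ) (γY : KhY →+ KtY →+ ℤ)
    (hnat : ∀ (x : KhX) (ξ : KtY), γY (fKh x) ξ = γX x (fKt ξ))
    (hγX : Function.Surjective γX)
    (huct : HasTrivialExtZ K1Y → Function.Bijective γY)
    (hext : HasTrivialExtZ K1Y)
    (rankY : KtY ≃+ C(Y, ℤ))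
    (rankX : KtX →+ C(X, ℤ)) (dimX : C(X, ℤ) →+ KtX)
    (hsplit : rankX.comp dimX = AddMonoidHom.id C(X, ℤ))
    (hcomp : ∀ ξ : KtY, rankX (fKt ξ) = (rankY ξ).comp f) :
    Function.Surjective fKh := by
  classical
  obtain ⟨hinj, _⟩ := huct hext
  intro y
  obtain ⟨Φ, hΦ⟩ := extend_hom f hf ((γY y).comp rankY.symm.toAddMonoidHom)
  obtain ⟨x, hx⟩ := hγX (Φ.comp rankX)
  refine ⟨x, ?_⟩
  apply hinj
  ext ξ
  rw [hnat, hx]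
  show Φ (rankX (fKt ξ)) = γY y ξ
  rw [hcomp ξ, hΦ (rankY ξ)]
  show γY y (rankY.symm (rankY ξ)) = γY y ξ
  rw [AddEquiv.symm_apply_apply]
end

section
/- Let H be a separable infinite-dimensional Hilbert space, {eᵢ}_{i∈ℤ} an orthonormal basis, and {zᵢ}_{i∈ℤ} a dense sequence in the unit circle 𝕋 such that Re zᵢ ≠ Re zⱼ for i ≠ j and lim_{i→∞} zᵢ = (1+i)/√2. Define D ∈ B(H) by D eᵢ = 2 Re(zᵢ) eᵢ, and define T by T eᵢ = zᵢ eᵢ for i ≤ 0, and for odd i ≥ 1: T eᵢ = (1/√2) eᵢ + (i/√2) e_{i+1}, T e_{i+1} = (i/√2) eᵢ + (1/√2) e_{i+1}. Then T is unitary and T + T* − D is compact. -/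
open scoped ComplexConjugate

local notation "⟪" x ", " y "⟫" => @inner ℂ _ _ x y



/-- With `{eᵢ}_{i∈ℤ}` an orthonormal basis of a separable Hilbert space,
`{zᵢ}` a dense sequence in the unit circle with pairwise distinct real parts and
`zᵢ → (1+i)/√2`, the operators `D eᵢ = 2 Re(zᵢ) eᵢ` and `T` (given by `T eᵢ = zᵢ eᵢ` for
`i ≤ 0` and 2×2 rotation blocks `((1/√2, i/√2),(i/√2, 1/√2))` on `(eᵢ, eᵢ₊₁)` for odd
`i ≥ 1`) satisfy: `T` is unitary and `T + T* − D` is compact. -/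
theorem stmt8 (H : Type*) [NormedAddCommGroup H] [InnerProductSpace ℂ H] [CompleteSpace H]
    [TopologicalSpace.SeparableSpace H]
    (e : HilbertBasis ℤ ℂ H)
    (z : ℤ → ℂ) (hz1 : ∀ i, ‖z i‖ = 1)
    (hzdense : ∀ w : ℂ, ‖w‖ = 1 → w ∈ closure (Set.range z))
    (hzre : Function.Injective fun i => (z i).re)
    (hzlim : Filter.Tendsto z Filter.atTop
      (nhds ((1 + Complex.I) / (Real.sqrt 2 : ℂ))))
    (D T : H →L[ℂ] H)
    (hD : ∀ i : ℤ, D (e i) = ((2 * (z i).re : ℝ) : ℂ) • e i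
)
    (hT0 : ∀ i : ℤ, i ≤ 0 → T (e i) = z i • e i)
    (hT1 : ∀ i : ℤ, 1 ≤ i → Odd i →
      T (e i) = ((Real.sqrt 2 : ℂ))⁻¹ • e i + (Complex.I / (Real.sqrt 2 : ℂ)) • e (i + 1) ∧
      T (e (i + 1)) =
        (Complex.I / (Real.sqrt 2 : ℂ)) • e i + ((Real.sqrt 2 : ℂ))⁻¹ • e (i + 1)) :
    T ∈ unitary (H →L[ℂ] H) ∧ IsCompactOperator ⇑(T + star T - D) := by
  classical
  set a : ℂ := ((Real.sqrt 2 : ℂ))⁻¹ with ha_def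
  set b : ℂ := Complex.I / (Real.sqrt 2 : ℂ) with hb_def
  have hs2 : (Real.sqrt 2 : ℂ) * (Real.sqrt 2 : ℂ) = 2 := by
    rw [← Complex.ofReal_mul, Real.mul_self_sqrt (by norm_num)]
    norm_num
  have hs2ne : (Real.sqrt 2 : ℂ) ≠ 0 := by
    intro h
    rw [h, mul_zero] at hs2
    norm_num at hs2
  have haa : a * a = 2⁻¹ := by
    rw [ha_def, ← mul_inv, hs2]
  have hbb : b * b = -2⁻¹ := by
    rw [hb_def, div_mul_div_comm, Complex.I_mul_I, hs2]
    norm_num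
  have hab : a * b = b * a := mul_comm a b
  have hca : conj a = a := by
    rw [ha_def, map_inv₀, Complex.conj_ofReal]
  have hcb : conj b = -b := by
    rw [hb_def, map_div₀, Complex.conj_I, Complex.conj_ofReal, neg_div]
  have hzz : ∀ i, conj (z i) * z i = 1 := by
    intro i
    rw [mul_comm, Complex.mul_conj]
    norm_cast
    simp [Complex.normSq_eq_norm_sq, hz1 i]
  -- orthonormality of basis
  have hee : ∀ i j : ℤ, ⟪e i, e j⟫ = if i = j then (1:ℂ) else 0 :=
    orthonormal_iff_ite.mp e.orthonormal
  -- case split on indices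
  have cases3 : ∀ i : ℤ, i ≤ 0 ∨ (1 ≤ i ∧ Odd i) ∨ ∃ k, 1 ≤ k ∧ Odd k ∧ i = k + 1 := by
    intro i
    rcases Int.even_or_odd i with he | ho
    · rcases le_or_gt i 0 with h | h
      · exact Or.inl h
      · obtain ⟨m, hm⟩ := he
        exact Or.inr (Or.inr ⟨i - 1, by omega, ⟨m - 1, by omega⟩, by ring⟩)
    · rcases le_or_gt i 0 with h | h
      · exact Or.inl h
      · exact Or.inr (Or.inl ⟨h, ho⟩)
  -- main orthogonality computation
  have orth : ∀ i j : ℤ, ⟪T (e i), T (e j)⟫ = if i = j then (1:ℂ) else 0 := by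
    have orthA : ∀ i j : ℤ, i ≤ 0 → ⟪T (e i), T (e j)⟫ = if i = j then (1:ℂ) else 0 := by
      intro i j hi
      rcases cases3 j with hj | ⟨hj1, hj2⟩ | ⟨k, hk1, hk2, rfl⟩
      · rw [hT0 i hi, hT0 j hj]
        by_cases h : i = j
        · subst h
          simp [inner_smul_left, inner_smul_right, hee, -inner_self_eq_norm_sq_to_K]
          rw [mul_comm]
          exact hzz i
        · simp [inner_smul_left, inner_smul_right, hee, h]
      · rw [hT0 i hi, (hT1 j hj1 hj2).1]
        simp [inner_add_right, inner_smul_left, inner_smul_right, hee,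
          show i ≠ j from by omega, show i ≠ j + 1 from by omega]
      · rw [hT0 i hi, (hT1 k hk1 hk2).2]
        simp [inner_add_right, inner_smul_left, inner_smul_right, hee,
          show i ≠ k from by omega, show i ≠ k + 1 from by omega]
    have symmflip : ∀ i j : ℤ, ⟪T (e j), T (e i)⟫ = (if j = i then (1:ℂ) else 0) →
        ⟪T (e i), T (e j)⟫ = if i = j then (1:ℂ) else 0 := by
      intro i j h
      rw [← inner_conj_symm, h]
      by_cases hij : i = j
      · simp [hij]
      · simp [hij, Ne.symm hij]
    -- the two mixed block cases
    have orthBB : ∀ i j : ℤ, 1 ≤ i → Odd i → 1 ≤ j → Odd j →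
        ⟪T (e i), T (e j)⟫ = if i = j then (1:ℂ) else 0 := by
      intro i j hi1 hi2 hj1 hj2
      obtain ⟨m, hm⟩ := hi2
      obtain ⟨n, hn⟩ := hj2
      rw [(hT1 i hi1 ⟨m, hm⟩).1, (hT1 j hj1 ⟨n, hn⟩).1]
      by_cases h : i = j
      · subst h
        simp [inner_add_left, inner_add_right, inner_smul_left, inner_smul_right, hee,
          -inner_self_eq_norm_sq_to_K, hca, hcb, show i ≠ i + 1 from by omega,
          show i + 1 ≠ i from by omega]
        linear_combination haa - hbb
      · simp only [inner_add_left, inner_add_right, inner_smul_left, inner_smul_right, hee,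
          hca, hcb, if_neg h, if_neg (show i ≠ j + 1 from by omega),
          if_neg (show i + 1 ≠ j from by omega),
          if_neg (show i + 1 ≠ j + 1 from by omega)]
        ring
    have orthBC : ∀ i k : ℤ, 1 ≤ i → Odd i → 1 ≤ k → Odd k →
        ⟪T (e i), T (e (k + 1))⟫ = if i = k + 1 then (1:ℂ) else 0 := by
      intro i k hi1 hi2 hk1 hk2
      obtain ⟨m, hm⟩ := hi2
      obtain ⟨n, hn⟩ := hk2
      rw [(hT1 i hi1 ⟨m, hm⟩).1, (hT1 k hk1 ⟨n, hn⟩).2]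
      by_cases h : i = k
      · subst h
        simp [inner_add_left, inner_add_right, inner_smul_left, inner_smul_right, hee,
          -inner_self_eq_norm_sq_to_K, hca, hcb, show i ≠ i + 1 from by omega,
          show i + 1 ≠ i from by omega]
        ring
      · simp only [inner_add_left, inner_add_right, inner_smul_left, inner_smul_right, hee,
          hca, hcb, if_neg h, if_neg (show i ≠ k + 1 from by omega),
          if_neg (show i + 1 ≠ k from by omega),
          if_neg (show i + 1 ≠ k + 1 from by omega)]
        ring
    have orthCC : ∀ k l : ℤ, 1 ≤ k → Odd k → 1 ≤ l → Odd l →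
        ⟪T (e (k + 1)), T (e (l + 1))⟫ = if k + 1 = l + 1 then (1:ℂ) else 0 := by
      intro k l hk1 hk2 hl1 hl2
      obtain ⟨m, hm⟩ := hk2
      obtain ⟨n, hn⟩ := hl2
      rw [(hT1 k hk1 ⟨m, hm⟩).2, (hT1 l hl1 ⟨n, hn⟩).2]
      by_cases h : k = l
      · subst h
        simp [inner_add_left, inner_add_right, inner_smul_left, inner_smul_right, hee,
          -inner_self_eq_norm_sq_to_K, hca, hcb, show k ≠ k + 1 from by omega,
          show k + 1 ≠ k from by omega]
        linear_combination haa - hbb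
      · simp only [inner_add_left, inner_add_right, inner_smul_left, inner_smul_right, hee,
          hca, hcb, if_neg h, if_neg (show k ≠ l + 1 from by omega),
          if_neg (show k + 1 ≠ l from by omega),
          if_neg (show k + 1 ≠ l + 1 from by omega)]
        ring
    intro i j
    rcases cases3 i with hi | ⟨hi1, hi2⟩ | ⟨k, hk1, hk2, rfl⟩
    · exact orthA i j hi
    · rcases cases3 j with hj | ⟨hj1, hj2⟩ | ⟨l, hl1, hl2, rfl⟩
      · exact symmflip _ _ (orthA j i hj)
      · exact orthBB i j hi1 hi2 hj1 hj2
      · exact orthBC i l hi1 hi2 hl1 hl2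
    · rcases cases3 j with hj | ⟨hj1, hj2⟩ | ⟨l, hl1, hl2, rfl⟩
      · exact symmflip _ _ (orthA j _ hj)
      · exact symmflip _ _ (orthBC j k hj1 hj2 hk1 hk2)
      · exact orthCC k l hk1 hk2 hl1 hl2
  -- preimages of basis vectors
  set v : ℤ → H := fun i =>
    if i ≤ 0 then conj (z i) • e i
    else if Odd i then a • e i - b • e (i + 1)
    else a • e i - b • e (i - 1) with hv_def
  have hTv : ∀ i : ℤ, T (v i) = e i := by
    intro i
    rcases cases3 i with hi | ⟨hi1, hi2⟩ | ⟨k, hk1, hk2, rfl⟩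
    · rw [hv_def]
      simp only [if_pos hi]
      rw [map_smul, hT0 i hi, smul_smul, hzz, one_smul]
    · rw [hv_def]
      simp only [if_neg (show ¬ i ≤ 0 from by omega), if_pos hi2]
      rw [map_sub, map_smul, map_smul, (hT1 i hi1 hi2).1, (hT1 i hi1 hi2).2]
      match_scalars
      · linear_combination haa - hbb
      · ring
    · obtain ⟨n, hn⟩ := hk2
      rw [hv_def]
      simp only [if_neg (show ¬ k + 1 ≤ 0 from by omega),
        if_neg (show ¬ Odd (k + 1) from by rintro ⟨m, hm⟩; omega),
        show k + 1 - 1 = k from by ring]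
      rw [map_sub, map_smul, map_smul, (hT1 k hk1 ⟨n, hn⟩).1, (hT1 k hk1 ⟨n, hn⟩).2]
      match_scalars
      · ring
      · linear_combination haa - hbb
  -- star T * T = 1
  have hdense : Dense ((Submodule.span ℂ (Set.range e) : Submodule ℂ H) : Set H) :=
    Submodule.dense_iff_topologicalClosure_eq_top.mpr e.dense_span
  have vecext : ∀ {x y : H}, (∀ j : ℤ, ⟪e j, x⟫ = ⟪e j, y⟫) → x = y := by
    intro x y h
    apply e.repr.injective
    ext j
    rw [e.repr_apply_apply, e.repr_apply_apply]
    exact h j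
  have hsTT : star T * T = 1 := by
    apply ContinuousLinearMap.ext_on hdense
    rintro _ ⟨i, rfl⟩
    apply vecext
    intro j
    rw [ContinuousLinearMap.mul_apply, ContinuousLinearMap.one_apply,
      ContinuousLinearMap.star_eq_adjoint, ContinuousLinearMap.adjoint_inner_right,
      orth, hee]
  have hnorm : ∀ x : H, ‖T x‖ = ‖x‖ := by
    intro x
    have h1 : ⟪T x, T x⟫ = ⟪x, x⟫ := by
      rw [← ContinuousLinearMap.adjoint_inner_right, ← ContinuousLinearMap.star_eq_adjoint]
      rw [show (star T) (T x) = (star T * T) x from rfl, hsTT, ContinuousLinearMap.one_apply]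
    have h2 := congrArg Complex.re h1
    rw [inner_self_eq_norm_sq_to_K (𝕜 := ℂ), inner_self_eq_norm_sq_to_K (𝕜 := ℂ)] at h1
    rw [← Real.sqrt_sq (norm_nonneg (T x)), ← Real.sqrt_sq (norm_nonneg x)]
    norm_cast at h1
    rw [h1]
  have hiso : Isometry ⇑T := AddMonoidHomClass.isometry_of_norm T hnorm
  have hrange : LinearMap.range (T : H →ₗ[ℂ] H) = ⊤ := by
    apply le_antisymm le_top
    rw [← e.dense_span]
    apply Submodule.topologicalClosure_minimal
    · rw [Submodule.span_le]
      rintro _ ⟨i, rfl⟩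
      exact ⟨v i, hTv i⟩
    · exact hiso.isClosedEmbedding.isClosed_range
  have hTsT : T * star T = 1 := by
    ext y
    obtain ⟨x, rfl⟩ := LinearMap.range_eq_top.mp hrange y
    have : (star T) (T x) = x := by
      rw [show (star T) (T x) = (star T * T) x from rfl, hsTT, ContinuousLinearMap.one_apply]
    simp [ContinuousLinearMap.mul_apply, this]
  have hstar_e : ∀ i : ℤ, (star T) (e i) = v i := by
    intro i
    conv_lhs => rw [← hTv i]
    rw [show (star T) (T (v i)) = (star T * T) (v i) from rfl, hsTT,
      ContinuousLinearMap.one_apply]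
  refine ⟨Unitary.mem_iff.mpr ⟨hsTT, hTsT⟩, ?_⟩
  -- the diagonal coefficients
  set c : ℤ → ℂ := fun i => if i ≤ 0 then 0 else 2 * a - 2 * ((z i).re : ℂ) with hc_def
  set K : H →L[ℂ] H := T + star T - D with hK_def
  have hK : ∀ i : ℤ, K (e i) = c i • e i := by
    intro i
    rw [hK_def, ContinuousLinearMap.sub_apply, ContinuousLinearMap.add_apply, hstar_e i,
      hD i, hv_def, hc_def]
    rcases cases3 i with hi | ⟨hi1, hi2⟩ | ⟨k, hk1, hk2, rfl⟩
    · simp only [if_pos hi]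
      rw [hT0 i hi]
      match_scalars
      have hac := Complex.add_conj (z i)
      push_cast at hac ⊢
      linear_combination hac
    · simp only [if_neg (show ¬ i ≤ 0 from by omega), if_pos hi2]
      rw [(hT1 i hi1 hi2).1]
      match_scalars
      · push_cast; ring
      · ring
    · obtain ⟨n, hn⟩ := hk2
      simp only [if_neg (show ¬ k + 1 ≤ 0 from by omega),
        if_neg (show ¬ Odd (k + 1) from by rintro ⟨m, hm⟩; omega),
        show k + 1 - 1 = k from by ring]
      rw [(hT1 k hk1 ⟨n, hn⟩).2]
      match_scalars
      · ring
      · push_cast; ring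
  have hctend : Filter.Tendsto c Filter.cofinite (nhds 0) := by
    rw [Int.cofinite_eq]
    rw [Filter.tendsto_sup]
    constructor
    · -- eventually zero at -infty
      have h0 : ∀ᶠ i in (Filter.atBot : Filter ℤ), c i = 0 := by
        filter_upwards [Filter.eventually_le_atBot (0 : ℤ)] with i hi
        rw [hc_def]
        exact if_pos hi
      exact Filter.Tendsto.congr' (by filter_upwards [h0] with i hi; exact hi.symm)
        tendsto_const_nhds
    · -- at +infty
      have hre : Filter.Tendsto (fun i => ((z i).re : ℂ)) Filter.atTop
          (nhds ((((1 + Complex.I) / (Real.sqrt 2 : ℂ)).re : ℝ) : ℂ)) :=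
        (Complex.continuous_ofReal.tendsto _).comp ((Complex.continuous_re.tendsto _).comp hzlim)
      have hrev : ((1 + Complex.I) / (Real.sqrt 2 : ℂ)).re = (Real.sqrt 2)⁻¹ := by
        rw [Complex.div_ofReal_re]
        norm_num
      have hlim : Filter.Tendsto (fun i => 2 * a - 2 * ((z i).re : ℂ)) Filter.atTop (nhds 0) := by
        have h2 := (tendsto_const_nhds (x := 2 * a) (f := Filter.atTop (α := ℤ))).sub
          (hre.const_mul 2)
        convert h2 using 2
        rw [hrev, ha_def]
        push_cast
        ring
      refine hlim.congr' ?_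
      filter_upwards [Filter.eventually_ge_atTop (1 : ℤ)] with i hi
      rw [hc_def]
      exact (if_neg (by omega)).symm
  -- finite rank approximants
  set F : Finset ℤ → (H →L[ℂ] H) := fun S =>
    ∑ i ∈ S, c i • ((innerSL ℂ (e i)).smulRight (e i)) with hF_def
  have hinner_cpt : ∀ w : H, IsCompactOperator ⇑(innerSL ℂ w) := by
    intro w
    refine ⟨Metric.closedBall 0 1, isCompact_closedBall _ _, ?_⟩
    have hc := (innerSL ℂ w).continuous.tendsto 0
    rw [map_zero] at hc
    exact hc (Metric.closedBall_mem_nhds 0 one_pos)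
  have hrank1 : ∀ u w : H, IsCompactOperator ⇑((innerSL ℂ u).smulRight w) := by
    intro u w
    have h := (hinner_cpt u).clm_comp (ContinuousLinearMap.toSpanSingleton ℂ w)
    have heq : ⇑((innerSL ℂ u).smulRight w) =
        (⇑(ContinuousLinearMap.toSpanSingleton ℂ w) ∘ ⇑(innerSL ℂ u)) := rfl
    rw [heq]
    exact h
  have hgen : ∀ S : Finset ℤ,
      IsCompactOperator ⇑(∑ i ∈ S, c i • ((innerSL ℂ (e i)).smulRight (e i))) := by
    intro S
    induction S using Finset.induction with
    | @insert j S' hnotmem ih =>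
      rw [Finset.sum_insert hnotmem]
      have h1 : IsCompactOperator (⇑(c j • ((innerSL ℂ (e j)).smulRight (e j))) +
          ⇑(∑ i ∈ S', c i • ((innerSL ℂ (e i)).smulRight (e i)))) :=
        IsCompactOperator.add (by
          have h2 := (hrank1 (e j) (e j)).smul (c j)
          have h3 : ⇑(c j • ((innerSL ℂ (e j)).smulRight (e j))) =
              c j • ⇑((innerSL ℂ (e j)).smulRight (e j)) := rfl
          rw [h3]; exact h2) ih
      exact h1
    | empty =>
      simp only [Finset.sum_empty]
      have : ⇑(0 : H →L[ℂ] H) = (0 : H → H) := rfl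
      rw [this]
      exact isCompactOperator_zero
  have hFcompact : ∀ S : Finset ℤ, IsCompactOperator ⇑(F S) := by
    intro S
    rw [hF_def]
    exact hgen S
  have hbound : ∀ (S : Finset ℤ) (ε : ℝ), 0 ≤ ε → (∀ i ∉ S, ‖c i‖ ≤ ε) →
      ∀ x : H, ‖K x - F S x‖ ≤ ε * ‖x‖ := by
    intro S ε hε hεc x
    set g : ℤ → ℂ := fun i => if i ∈ S then 0 else (e.repr x i * c i) with hg_def
    have h1 : HasSum (fun i => (e.repr x i * c i) • e i) (K x) := by
      have h := (e.hasSum_repr x).mapL K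
      refine h.congr_fun fun i => ?_
      rw [map_smul, hK i, smul_smul]
    have h2 : F S x = ∑ i ∈ S, (e.repr x i * c i) • e i := by
      rw [hF_def]
      rw [ContinuousLinearMap.sum_apply]
      refine Finset.sum_congr rfl fun i _ => ?_
      rw [ContinuousLinearMap.smul_apply, ContinuousLinearMap.smulRight_apply,
        innerSL_apply_apply, smul_smul, e.repr_apply_apply, mul_comm]
    have hfin : HasSum (fun i => if i ∈ S then (e.repr x i * c i) • e i else 0) (F S x) := by
      rw [h2, ← Finset.sum_congr rfl (fun i (hi : i ∈ S) => if_pos hi)]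
      exact hasSum_sum_of_ne_finset_zero fun i hi => if_neg hi
    have h3 : HasSum (fun i => g i • e i) (K x - F S x) := by
      refine (h1.sub hfin).congr_fun fun i => ?_
      by_cases hi : i ∈ S <;> simp [hg_def, hi]
    have h4 : ∀ j, e.repr (K x - F S x) j = g j := by
      intro j
      have h5 := h3.mapL (innerSL ℂ (e j))
      have h6 : HasSum (fun i => if i = j then g j else 0) ⟪e j, K x - F S x⟫ := by
        refine h5.congr_fun fun i => ?_
        rw [innerSL_apply_apply, inner_smul_right, hee]
        by_cases hij : i = j
        · subst hij; simp
        · simp [Ne.symm hij, hij]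
      rw [e.repr_apply_apply]
      exact ((hasSum_ite_eq j (g j)).unique h6).symm
    have hnormy : ‖K x - F S x‖ = ‖e.repr (K x - F S x)‖ := (e.repr.norm_map _).symm
    rw [hnormy]
    have hp : 0 < (2 : ENNReal).toReal := by norm_num
    refine lp.norm_le_of_forall_sum_le hp (mul_nonneg hε (norm_nonneg x)) fun s => ?_
    have hxnorm : ∑ j ∈ s, ‖e.repr x j‖ ^ (2 : ENNReal).toReal
        ≤ ‖e.repr x‖ ^ (2 : ENNReal).toReal := lp.sum_rpow_le_norm_rpow hp (e.repr x) s
    have htoreal : (2 : ENNReal).toReal = (2 : ℝ) := by norm_num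
    rw [htoreal] at hxnorm ⊢
    have hpt : ∀ j, ‖(e.repr (K x - F S x)) j‖ ^ (2:ℝ) ≤ ε ^ (2:ℝ) * ‖e.repr x j‖ ^ (2:ℝ) := by
      intro j
      rw [h4 j]
      have hb1 : ‖g j‖ ≤ ε * ‖e.repr x j‖ := by
        rw [hg_def]
        by_cases hj : j ∈ S
        · simp only [if_pos hj, norm_zero]
          positivity
        · simp only [if_neg hj, norm_mul]
          rw [mul_comm]
          exact mul_le_mul_of_nonneg_right (hεc j hj) (norm_nonneg _)
      calc ‖g j‖ ^ (2:ℝ) ≤ (ε * ‖e.repr x j‖) ^ (2:ℝ) := by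
            apply Real.rpow_le_rpow (norm_nonneg _) hb1 (by norm_num)
        _ = ε ^ (2:ℝ) * ‖e.repr x j‖ ^ (2:ℝ) :=
            Real.mul_rpow hε (norm_nonneg _)
    calc ∑ j ∈ s, ‖(e.repr (K x - F S x)) j‖ ^ (2:ℝ)
        ≤ ∑ j ∈ s, ε ^ (2:ℝ) * ‖e.repr x j‖ ^ (2:ℝ) := Finset.sum_le_sum fun j _ => hpt j
      _ = ε ^ (2:ℝ) * ∑ j ∈ s, ‖e.repr x j‖ ^ (2:ℝ) := by rw [Finset.mul_sum]
      _ ≤ ε ^ (2:ℝ) * ‖e.repr x‖ ^ (2:ℝ) := by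
            apply mul_le_mul_of_nonneg_left hxnorm
            positivity
      _ = (ε * ‖x‖) ^ (2:ℝ) := by
            rw [e.repr.norm_map, Real.mul_rpow hε (norm_nonneg x)]
  have htend : Filter.Tendsto F Filter.atTop (nhds K) := by
    rw [Metric.tendsto_atTop]
    intro ε hε
    have hev := hctend (Metric.ball_mem_nhds 0 (half_pos hε))
    rw [Filter.mem_map, Filter.mem_cofinite] at hev
    refine ⟨hev.toFinset, fun S hS => ?_⟩
    have hout : ∀ i ∉ S, ‖c i‖ ≤ ε / 2 := by
      intro i hi
      by_contra hcon
      have hiN : i ∈ hev.toFinset := by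
        rw [Set.Finite.mem_toFinset]
        simp only [Set.mem_compl_iff, Set.mem_preimage, Metric.mem_ball, dist_zero_right]
        intro h
        exact hcon (le_of_lt h)
      exact hi (hS hiN)
    have hop : ‖F S - K‖ ≤ ε / 2 := by
      apply ContinuousLinearMap.opNorm_le_bound _ (by positivity)
      intro x
      rw [ContinuousLinearMap.sub_apply, norm_sub_rev]
      exact hbound S (ε / 2) (by positivity) hout x
    rw [dist_eq_norm]
    calc ‖F S - K‖ ≤ ε / 2 := hop
      _ < ε := by linarith
  exact isCompactOperator_of_tendsto htend (Filter.Eventually.of_forall hFcompact)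
end

section
/- With D and T as in the counterexample construction (T unitary with σ(T) = 𝕋, T + T* − D compact, D diagonal with distinct real eigenvalues 2Re zᵢ), there exists no normal operator N with N + N* = D and N − T compact. -/
/-- With `D` and `T` as in the counterexample construction
(`{eᵢ}_{i∈ℤ}` an orthonormal basis, `{zᵢ}` dense in the circle with distinct real
parts and limit `(1+i)/√2`, `D eᵢ = 2 Re(zᵢ) eᵢ`, `T` unitary with `σ(T) = 𝕋` acting
diagonally for `i ≤ 0` and by rotation blocks on pairs `(eᵢ, eᵢ₊₁)` for odd `i ≥ 1`,
and `T + T* − D` compact), there is no normal operator `N` with `N + N* = D` and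
`N − T` compact. -/
theorem stmt10 (H : Type*) [NormedAddCommGroup H] [InnerProductSpace ℂ H] [CompleteSpace H]
    [TopologicalSpace.SeparableSpace H]
    (e : HilbertBasis ℤ ℂ H)
    (z : ℤ → ℂ) (hz1 : ∀ i, ‖z i‖ = 1)
    (hzdense : ∀ w : ℂ, ‖w‖ = 1 → w ∈ closure (Set.range z))
    (hzre : Function.Injective fun i => (z i).re)
    (hzlim : Filter.Tendsto z Filter.atTop
      (nhds ((1 + Complex.I) / (Real.sqrt 2 : ℂ))))
    (D T : H →L[ℂ] H)
    (hD : ∀ i : ℤ, D (e i) = ((2 * (z i).re : ℝ) : ℂ) • e i)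
    (hT0 : ∀ i : ℤ, i ≤ 0 → T (e i) = z i • e i)
    (hT1 : ∀ i : ℤ, 1 ≤ i → Odd i →
      T (e i) = ((Real.sqrt 2 : ℂ))⁻¹ • e i + (Complex.I / (Real.sqrt 2 : ℂ)) • e (i + 1) ∧
      T (e (i + 1)) =
        (Complex.I / (Real.sqrt 2 : ℂ)) • e i + ((Real.sqrt 2 : ℂ))⁻¹ • e (i + 1))
    (hTu : T ∈ unitary (H →L[ℂ] H))
    (hσT : spectrum ℂ T = {w : ℂ | ‖w‖ = 1})
    (hTD : IsCompactOperator ⇑(T + star T - D)) :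
    ¬ ∃ N : H →L[ℂ] H,
        N * star N = star N * N ∧ N + star N = D ∧ IsCompactOperator ⇑(N - T) := by
  rintro ⟨N, hNnorm, hND, hNK⟩
  classical
  have hortho : ∀ i j : ℤ, inner ℂ (e i) (e j) = if i = j then (1:ℂ) else 0 :=
    fun i j => orthonormal_iff_ite.mp e.orthonormal i j
  -- D is self-adjoint
  have hDsa : ContinuousLinearMap.adjoint D = D := by
    rw [← ContinuousLinearMap.star_eq_adjoint, ← hND, star_add, star_star, add_comm]
  -- D commutes with N
  have hcomm : D * N = N * D := by
    rw [← hND, add_mul, mul_add, hNnorm]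
  -- N is diagonal
  have hdiag : ∀ i j : ℤ, i ≠ j → inner ℂ (e i) (N (e j)) = (0 : ℂ) := by
    intro i j hij
    have h1 : inner ℂ (e i) ((D * N) (e j)) =
        ((2 * (z i).re : ℝ) : ℂ) * inner ℂ (e i) (N (e j)) := by
      have := ContinuousLinearMap.adjoint_inner_left D (N (e j)) (e i)
      rw [hDsa] at this
      rw [ContinuousLinearMap.mul_apply, ← this, hD i, inner_smul_left, Complex.conj_ofReal]
    have h2 : inner ℂ (e i) ((N * D) (e j)) =
        ((2 * (z j).re : ℝ) : ℂ) * inner ℂ (e i) (N (e j)) := by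
      rw [ContinuousLinearMap.mul_apply, hD j, map_smul, inner_smul_right]
    rw [hcomm, h2] at h1
    have hne : ((2 * (z j).re : ℝ) : ℂ) ≠ ((2 * (z i).re : ℝ) : ℂ) := by
      intro h
      rw [Complex.ofReal_inj] at h
      have : (z j).re = (z i).re := by linarith
      exact hij (hzre this).symm
    by_contra h
    exact hne (mul_right_cancel₀ h h1)
  -- the key off-diagonal entries of N - T
  have hent : ∀ k : ℕ, inner ℂ (e (2*(k:ℤ)+1+1)) ((N - T) (e (2*(k:ℤ)+1)))
      = -(Complex.I / (Real.sqrt 2 : ℂ)) := by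
    intro k
    have h1 : (1:ℤ) ≤ 2*(k:ℤ)+1 := by omega
    have hodd : Odd (2*(k:ℤ)+1) := ⟨k, by ring⟩
    have hT := (hT1 _ h1 hodd).1
    rw [ContinuousLinearMap.sub_apply, inner_sub_right, hdiag _ _ (by omega), hT,
      inner_add_right, inner_smul_right, inner_smul_right, hortho, hortho]
    simp
  -- get a compact set absorbing a scaled copy of the sequence
  obtain ⟨K, hK, hKmem⟩ := hNK
  obtain ⟨ε, hε, hball⟩ := Metric.mem_nhds_iff.mp hKmem
  set c : ℂ := ((ε/2 : ℝ) : ℂ) with hc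
  have hcnorm : ‖c‖ = ε/2 := by
    rw [hc, Complex.norm_real, Real.norm_of_nonneg (by linarith)]
  have hmem : ∀ k : ℕ, (N - T) (c • e (2*(k:ℤ)+1)) ∈ K := by
    intro k
    apply hball
    rw [Metric.mem_ball, dist_zero_right, norm_smul, hcnorm]
    simp [e.orthonormal.1]
    linarith
  obtain ⟨a, haK, φ, hφ, hconv⟩ :=
    hK.tendsto_subseq (x := fun k : ℕ => (N - T) (c • e (2*(k:ℤ)+1))) hmem
  -- inner products with the basis tend to 0 (Bessel)
  have hbessel : Filter.Tendsto (fun i : ℤ => inner ℂ (e i) a : ℤ → ℂ)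
      Filter.atTop (nhds 0) := by
    have hs := (e.summable_inner_mul_inner a a).tendsto_cofinite_zero
    have hs' : Filter.Tendsto (fun i : ℤ => inner ℂ a (e i) * inner ℂ (e i) a : ℤ → ℂ)
        Filter.atTop (nhds 0) := hs.mono_left Filter.atTop_le_cofinite
    have hn : Filter.Tendsto (fun i : ℤ => ‖(inner ℂ (e i) a : ℂ)‖)
        Filter.atTop (nhds 0) := by
      have := hs'.norm
      simp only [norm_zero] at this
      have heq : ∀ i : ℤ, ‖(inner ℂ a (e i) * inner ℂ (e i) a : ℂ)‖
          = ‖(inner ℂ (e i) a : ℂ)‖^2 := by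
        intro i
        rw [norm_mul, ← inner_conj_symm (e i) a, RCLike.norm_conj, sq]
      have h2 := (Real.continuous_sqrt.tendsto 0).comp this
      rw [Real.sqrt_zero] at h2
      refine h2.congr fun i => ?_
      rw [Function.comp_apply, heq, Real.sqrt_sq (norm_nonneg _)]
    rw [← tendsto_zero_iff_norm_tendsto_zero] at hn
    exact hn
  -- the subsequence of inner products tends to 0
  have hm : Filter.Tendsto (fun k : ℕ => (2*((φ k :ℕ):ℤ)+1+1 : ℤ))
      Filter.atTop Filter.atTop := by
    apply Filter.tendsto_atTop_mono (f := fun k : ℕ => (k:ℤ))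
    · intro k
      have h3 : k ≤ φ k := hφ.le_apply
      push_cast
      omega
    · exact tendsto_natCast_atTop_atTop
  have hinner0 : Filter.Tendsto
      (fun k : ℕ => (inner ℂ (e (2*((φ k :ℕ):ℤ)+1+1)) ((N - T) (c • e (2*((φ k:ℕ):ℤ)+1))) : ℂ))
      Filter.atTop (nhds 0) := by
    have hsplit : ∀ k : ℕ,
        (inner ℂ (e (2*((φ k :ℕ):ℤ)+1+1)) ((N - T) (c • e (2*((φ k:ℕ):ℤ)+1))) : ℂ)
        = inner ℂ (e (2*((φ k :ℕ):ℤ)+1+1)) (((N - T) (c • e (2*((φ k:ℕ):ℤ)+1))) - a)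
          + inner ℂ (e (2*((φ k :ℕ):ℤ)+1+1)) a := by
      intro k; rw [← inner_add_right, sub_add_cancel]
    have h1 : Filter.Tendsto
        (fun k : ℕ => (inner ℂ (e (2*((φ k :ℕ):ℤ)+1+1))
          (((N - T) (c • e (2*((φ k:ℕ):ℤ)+1))) - a) : ℂ)) Filter.atTop (nhds 0) := by
      rw [tendsto_zero_iff_norm_tendsto_zero]
      have hdist : Filter.Tendsto
          (fun k : ℕ => ‖((N - T) (c • e (2*((φ k:ℕ):ℤ)+1))) - a‖)
          Filter.atTop (nhds 0) := by
        rw [← tendsto_zero_iff_norm_tendsto_zero]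
        exact tendsto_sub_nhds_zero_iff.mpr hconv
      refine squeeze_zero (fun k => norm_nonneg _) (fun k => ?_) hdist
      calc ‖(inner ℂ (e (2*((φ k :ℕ):ℤ)+1+1))
            (((N - T) (c • e (2*((φ k:ℕ):ℤ)+1))) - a) : ℂ)‖
          ≤ ‖e (2*((φ k :ℕ):ℤ)+1+1)‖ * ‖((N - T) (c • e (2*((φ k:ℕ):ℤ)+1))) - a‖ :=
            norm_inner_le_norm _ _
        _ = ‖((N - T) (c • e (2*((φ k:ℕ):ℤ)+1))) - a‖ := by
            rw [e.orthonormal.1, one_mul]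
      done
    have h2 := hbessel.comp hm
    have := h1.add h2
    rw [add_zero] at this
    exact this.congr fun k => (hsplit k).symm
  -- but those inner products have constant positive norm
  have hval : ∀ k : ℕ,
      (inner ℂ (e (2*((φ k :ℕ):ℤ)+1+1)) ((N - T) (c • e (2*((φ k:ℕ):ℤ)+1))) : ℂ)
      = c * -(Complex.I / (Real.sqrt 2 : ℂ)) := by
    intro k
    rw [map_smul, inner_smul_right, hent (φ k)]
  have hlim := hinner0.congr hval
  have : c * -(Complex.I / (Real.sqrt 2 : ℂ)) = 0 := tendsto_nhds_unique tendsto_const_nhds hlim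
  have hI : (Complex.I / (Real.sqrt 2 : ℂ)) ≠ 0 := by
    apply div_ne_zero Complex.I_ne_zero
    simp [Complex.ofReal_eq_zero]
  have hc0 : c ≠ 0 := by
    rw [hc]
    simp only [ne_eq, Complex.ofReal_eq_zero]
    positivity
  rw [mul_eq_zero, neg_eq_zero] at this
  tauto
end

section
/- Let σ₁, σ₂ : ℕ → ℕ be injections with disjoint ranges whose union is ℕ, let {χᵢ}_{i≥1} be an orthonormal family in H, let P be the orthogonal projection onto the closed span of the χᵢ, let V : PH → H be the isometry with V χᵢ = χ_{σ₁(i)}, and set S = P^⊥ + V P. Then S is an isometry of H with range H ⊖ span{χ_{σ₂(i)} : i ≥ 1}, and if T : H → H is the isometry with T eᵢ = χ_{σ₂(i)} for an orthonormal basis {eᵢ}, then S S* + T T* = 1. -/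
open scoped InnerProductSpace

private lemma memOrthSpan {H : Type*} [NormedAddCommGroup H] [InnerProductSpace ℂ H]
    {s : Set H} {x : H} (h : ∀ y ∈ s, ⟪y, x⟫_ℂ = 0) : x ∈ (Submodule.span ℂ s)ᗮ := by
  rw [Submodule.mem_orthogonal]
  intro u hu
  induction hu using Submodule.span_induction with
  | mem y hy => exact h y hy
  | zero => exact inner_zero_left x
  | add a b _ _ ha hb => rw [inner_add_left, ha, hb, add_zero]
  | smul c a _ ha => rw [inner_smul_left, ha, mul_zero]

private lemma normMapSpan {H : Type*} [NormedAddCommGroup H] [InnerProductSpace ℂ H]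
    {ι : Type*} {v w : ι → H} (hv : Orthonormal ℂ v) (hw : Orthonormal ℂ w)
    (A : H →L[ℂ] H) (hA : ∀ i, A (v i) = w i) :
    ∀ x ∈ Submodule.span ℂ (Set.range v), ‖A x‖ = ‖x‖ := by
  intro x hx
  rw [Finsupp.mem_span_range_iff_exists_finsupp] at hx
  obtain ⟨c, rfl⟩ := hx
  rw [← Finsupp.linearCombination_apply]
  have h1 : A (Finsupp.linearCombination ℂ v c) = Finsupp.linearCombination ℂ w c := by
    have := Finsupp.apply_linearCombination ℂ (A : H →ₗ[ℂ] H) v c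
    simpa [show (⇑A ∘ v) = w from funext hA] using this
  have h2 : ⟪A (Finsupp.linearCombination ℂ v c), A (Finsupp.linearCombination ℂ v c)⟫_ℂ
      = ⟪(Finsupp.linearCombination ℂ v c), (Finsupp.linearCombination ℂ v c)⟫_ℂ := by
    rw [h1, hw.inner_finsupp_eq_sum_left, hv.inner_finsupp_eq_sum_left]
  rw [norm_eq_sqrt_re_inner (𝕜 := ℂ), norm_eq_sqrt_re_inner (𝕜 := ℂ), h2]

/-- Let `σ₁, σ₂ : ℕ → ℕ` be injections with disjoint ranges covering `ℕ`,
`{χᵢ}` an orthonormal family in `H`, `P` the orthogonal projection onto the closed span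
of the `χᵢ`, `S = P^⊥ + V P` where `V χᵢ = χ_{σ₁(i)}`, and `T` the isometry with
`T eᵢ = χ_{σ₂(i)}` for an orthonormal basis `{eᵢ}`.  Then `S` and `T` are isometries,
the range of `S` is the orthogonal complement of `span{χ_{σ₂(i)}}`, and
`S S* + T T* = 1`. -/
theorem stmt14 (H : Type*) [NormedAddCommGroup H] [InnerProductSpace ℂ H] [CompleteSpace H]
    (σ₁ σ₂ : ℕ → ℕ) (h1 : Function.Injective σ₁) (h2 : Function.Injective σ₂)
    (hdisj : ∀ i j, σ₁ i ≠ σ₂ j)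
    (hcover : ∀ n : ℕ, (∃ i, σ₁ i = n) ∨ ∃ i, σ₂ i = n)
    (χ : ℕ → H) (hχ : Orthonormal ℂ χ)
    (P : H →L[ℂ] H) (hPidem : P * P = P) (hPsa : IsSelfAdjoint P)
    (hPfix : ∀ i, P (χ i) = χ i)
    (hPker : ∀ ξ : H, (∀ i, (inner ℂ (χ i) ξ : ℂ) = 0) → P ξ = 0)
    (S : H →L[ℂ] H) (hSχ : ∀ i, S (χ i) = χ (σ₁ i)) (hSperp : ∀ ξ, P ξ = 0 → S ξ = ξ)
    (e : HilbertBasis ℕ ℂ H)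
    (T : H →L[ℂ] H) (hT : ∀ i, T (e i) = χ (σ₂ i)) :
    star S * S = 1 ∧ star T * T = 1 ∧
    Set.range ⇑S = ((Submodule.span ℂ (Set.range fun i => χ (σ₂ i)))ᗮ : Set H) ∧
    S * star S + T * star T = 1 := by
  classical
  set M₀ : Submodule ℂ H := Submodule.span ℂ (Set.range χ) with hM₀def
  set M : Submodule ℂ H := M₀ᗮᗮ with hMdef
  set N : Submodule ℂ H := Submodule.span ℂ (Set.range fun i => χ (σ₂ i)) with hNdef
  set N₁ : Submodule ℂ H := Submodule.span ℂ (Set.range fun i => χ (σ₁ i)) with hN₁def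
  set M₁ : Submodule ℂ H := N₁ᗮᗮ with hM₁def
  haveI : CompleteSpace M := by rw [hMdef]; infer_instance
  haveI : CompleteSpace M₁ := by rw [hM₁def]; infer_instance
  haveI : Submodule.HasOrthogonalProjection M := Submodule.HasOrthogonalProjection.ofCompleteSpace (K := M)
  haveI : Submodule.HasOrthogonalProjection M₁ := Submodule.HasOrthogonalProjection.ofCompleteSpace (K := M₁)
  haveI : CompleteSpace (Nᗮ) := Submodule.instOrthogonalCompleteSpace N
  haveI : Submodule.HasOrthogonalProjection (Nᗮ) := Submodule.HasOrthogonalProjection.ofCompleteSpace (K := Nᗮ)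
  have hMset : (M : Set H) = closure (M₀ : Set H) := by
    rw [hMdef, Submodule.orthogonal_orthogonal_eq_closure, Submodule.topologicalClosure_coe]
  have hM₁set : (M₁ : Set H) = closure (N₁ : Set H) := by
    rw [hM₁def, Submodule.orthogonal_orthogonal_eq_closure, Submodule.topologicalClosure_coe]
  have hMorth : Mᗮ = M₀ᗮ := by
    rw [hMdef]; exact Submodule.triorthogonal_eq_orthogonal
  have hχM₀ : ∀ i, χ i ∈ M₀ := fun i => Submodule.subset_span ⟨i, rfl⟩
  have hχσ₂N : ∀ j, χ (σ₂ j) ∈ N := fun j => Submodule.subset_span ⟨j, rfl⟩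
  have hχσ₁N₁ : ∀ j, χ (σ₁ j) ∈ N₁ := fun j => Submodule.subset_span ⟨j, rfl⟩
  have hχσ₂N₁orth : ∀ j, χ (σ₂ j) ∈ N₁ᗮ := by
    intro j
    rw [hN₁def]
    apply memOrthSpan
    rintro _ ⟨i, rfl⟩
    exact hχ.2 (hdisj i j)
  have hperp_inner : ∀ x ∈ Mᗮ, ∀ i, ⟪χ i, x⟫_ℂ = 0 := by
    intro x hx i
    rw [hMorth] at hx
    exact Submodule.inner_right_of_mem_orthogonal (hχM₀ i) hx
  have hSfix : ∀ x ∈ Mᗮ, S x = x := fun x hx => hSperp x (hPker x (hperp_inner x hx))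
  have hSM₀ : ∀ x ∈ M₀, S x ∈ N₁ := by
    intro x hx
    have hmap : Submodule.map (S : H →ₗ[ℂ] H) M₀ ≤ N₁ := by
      rw [hM₀def, Submodule.map_span, Submodule.span_le]
      rintro _ ⟨_, ⟨i, rfl⟩, rfl⟩
      simpa [hSχ i] using hχσ₁N₁ i
    exact hmap ⟨x, hx, rfl⟩
  have hSM : ∀ x ∈ M, S x ∈ M₁ := by
    intro x hx
    have hx' : x ∈ closure (M₀ : Set H) := by rw [← hMset]; exact hx
    have h1' : S x ∈ closure (⇑S '' (M₀ : Set H)) :=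
      image_closure_subset_closure_image S.continuous ⟨x, hx', rfl⟩
    have h2' : closure (⇑S '' (M₀ : Set H)) ⊆ closure (N₁ : Set H) :=
      closure_mono (by rintro _ ⟨y, hy, rfl⟩; exact hSM₀ y hy)
    have : S x ∈ (M₁ : Set H) := by rw [hM₁set]; exact h2' h1'
    exact this
  have hM₁leM : M₁ ≤ M := by
    rw [hM₁def, hMdef]
    apply Submodule.orthogonal_le
    apply Submodule.orthogonal_le
    rw [hN₁def, hM₀def, Submodule.span_le]
    rintro _ ⟨i, rfl⟩
    exact hχM₀ (σ₁ i)
  -- norm preservation of S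
  have hSnorm : ∀ ξ : H, ‖S ξ‖ = ‖ξ‖ := by
    intro ξ
    obtain ⟨m, hm, m', hm', rfl⟩ := M.exists_add_mem_mem_orthogonal ξ
    have hSm' := hSfix m' hm'
    have hSm : S m ∈ M := hM₁leM (hSM m hm)
    have hEq : Set.EqOn (fun x => ‖S x‖) (fun x => ‖x‖) (closure (M₀ : Set H)) :=
      Set.EqOn.closure (fun x hx => normMapSpan hχ (hχ.comp σ₁ h1) S hSχ x hx)
        (continuous_norm.comp S.continuous) continuous_norm
    have hnm : ‖S m‖ = ‖m‖ := hEq (by rw [← hMset]; exact hm)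
    have o1 : ⟪S m, m'⟫_ℂ = 0 := Submodule.inner_right_of_mem_orthogonal hSm hm'
    have o2 : ⟪m, m'⟫_ℂ = 0 := Submodule.inner_right_of_mem_orthogonal hm hm'
    have e1 : ‖S m + m'‖ * ‖S m + m'‖ = ‖S m‖ * ‖S m‖ + ‖m'‖ * ‖m'‖ :=
      norm_add_sq_eq_norm_sq_add_norm_sq_of_inner_eq_zero _ _ o1
    have e2 : ‖m + m'‖ * ‖m + m'‖ = ‖m‖ * ‖m‖ + ‖m'‖ * ‖m'‖ :=
      norm_add_sq_eq_norm_sq_add_norm_sq_of_inner_eq_zero _ _ o2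
    have hmap : S (m + m') = S m + m' := by rw [map_add, hSm']
    rw [hmap]
    have key : ‖S m + m'‖ * ‖S m + m'‖ = ‖m + m'‖ * ‖m + m'‖ := by
      rw [e1, e2, hnm]
    have hstep : ‖S m + m'‖ = Real.sqrt (‖S m + m'‖ * ‖S m + m'‖) :=
      (Real.sqrt_mul_self (norm_nonneg _)).symm
    rw [hstep, key, Real.sqrt_mul_self (norm_nonneg _)]
  have hS1 : star S * S = 1 := by
    rw [ContinuousLinearMap.star_eq_adjoint]
    exact (S.norm_map_iff_adjoint_comp_self).mp hSnorm
  -- T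
  have hespan : closure ((Submodule.span ℂ (Set.range ⇑e) : Submodule ℂ H) : Set H)
      = Set.univ := by
    rw [← Submodule.topologicalClosure_coe, e.dense_span, Submodule.top_coe]
  have hTnorm : ∀ ξ : H, ‖T ξ‖ = ‖ξ‖ := by
    intro ξ
    have hEq : Set.EqOn (fun x => ‖T x‖) (fun x => ‖x‖)
        (closure ((Submodule.span ℂ (Set.range ⇑e) : Submodule ℂ H) : Set H)) :=
      Set.EqOn.closure (fun x hx => normMapSpan e.orthonormal (hχ.comp σ₂ h2) T hT x hx)
        (continuous_norm.comp T.continuous) continuous_norm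
    exact hEq (by rw [hespan]; trivial)
  have hT1 : star T * T = 1 := by
    rw [ContinuousLinearMap.star_eq_adjoint]
    exact (T.norm_map_iff_adjoint_comp_self).mp hTnorm
  -- T maps everything into Nᗮᗮ
  have hNset : ((Nᗮᗮ : Submodule ℂ H) : Set H) = closure (N : Set H) := by
    rw [Submodule.orthogonal_orthogonal_eq_closure, Submodule.topologicalClosure_coe]
  have hTN : ∀ v : H, T v ∈ Nᗮᗮ := by
    have hTmap : ∀ x ∈ Submodule.span ℂ (Set.range ⇑e), T x ∈ N := by
      intro x hx
      have hmap : Submodule.map (T : H →ₗ[ℂ] H) (Submodule.span ℂ (Set.range ⇑e)) ≤ N := by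
        rw [Submodule.map_span, Submodule.span_le]
        rintro _ ⟨_, ⟨i, rfl⟩, rfl⟩
        simpa [hT i] using hχσ₂N i
      exact hmap ⟨x, hx, rfl⟩
    intro v
    have hv : v ∈ closure ((Submodule.span ℂ (Set.range ⇑e) : Submodule ℂ H) : Set H) := by
      rw [hespan]; trivial
    have h1' : T v ∈ closure (⇑T '' ((Submodule.span ℂ (Set.range ⇑e) : Submodule ℂ H) : Set H)) :=
      image_closure_subset_closure_image T.continuous ⟨v, hv, rfl⟩
    have h2' : closure (⇑T '' ((Submodule.span ℂ (Set.range ⇑e) : Submodule ℂ H) : Set H))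
        ⊆ closure (N : Set H) :=
      closure_mono (by rintro _ ⟨y, hy, rfl⟩; exact hTmap y hy)
    have : T v ∈ ((Nᗮᗮ : Submodule ℂ H) : Set H) := by rw [hNset]; exact h2' h1'
    exact this
  -- range T ⊇ Nᗮᗮ
  have hNrangeT : ∀ x ∈ Nᗮᗮ, ∃ u, T u = x := by
    have hiso : Isometry ⇑T := AddMonoidHomClass.isometry_of_norm T hTnorm
    have hclosed : IsClosed (Set.range ⇑T) := hiso.isClosedEmbedding.isClosed_range
    have hle : N ≤ LinearMap.range (T : H →ₗ[ℂ] H) := by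
      rw [hNdef, Submodule.span_le]
      rintro _ ⟨i, rfl⟩
      exact ⟨e i, hT i⟩
    have hle2 : Nᗮᗮ ≤ LinearMap.range (T : H →ₗ[ℂ] H) := by
      rw [Submodule.orthogonal_orthogonal_eq_closure]
      exact Submodule.topologicalClosure_minimal _ hle (by exact hclosed)
    intro x hx
    exact hle2 hx
  -- range S ⊆ Nᗮ
  have hSsub : ∀ ξ : H, S ξ ∈ Nᗮ := by
    intro ξ
    obtain ⟨m, hm, m', hm', rfl⟩ := M.exists_add_mem_mem_orthogonal ξ
    rw [map_add, hSfix m' hm']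
    have hSmM₁ : S m ∈ M₁ := hSM m hm
    apply Submodule.add_mem
    · rw [hNdef]
      apply memOrthSpan
      rintro _ ⟨j, rfl⟩
      have haM₁ : S m ∈ (N₁ᗮ)ᗮ := by rw [← hM₁def]; exact hSmM₁
      exact Submodule.inner_right_of_mem_orthogonal (hχσ₂N₁orth j) haM₁
    · rw [hNdef]
      apply memOrthSpan
      rintro _ ⟨j, rfl⟩
      exact hperp_inner m' hm' (σ₂ j)
  -- range S ⊇ Nᗮ
  have hSsup : ∀ x ∈ Nᗮ, ∃ u, S u = x := by
    intro x hx
    obtain ⟨m, hm, m', hm', hxd⟩ := M.exists_add_mem_mem_orthogonal x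
    have hm'N : m' ∈ Nᗮ := by
      rw [hNdef]
      apply memOrthSpan
      rintro _ ⟨j, rfl⟩
      exact hperp_inner m' hm' (σ₂ j)
    have hmN : m ∈ Nᗮ := by
      have hsub := Submodule.sub_mem (Nᗮ) hx hm'N
      have : x - m' = m := by rw [hxd]; abel
      rwa [this] at hsub
    have hmM₁ : m ∈ M₁ := by
      obtain ⟨a, ha, b, hb, hab⟩ := M₁.exists_add_mem_mem_orthogonal m
      have hba : b = m - a := by rw [hab]; abel
      have hbM : b ∈ M := by rw [hba]; exact M.sub_mem hm (hM₁leM ha)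
      have hbMperp : b ∈ Mᗮ := by
        rw [hMorth, hM₀def]
        apply memOrthSpan
        rintro _ ⟨i, rfl⟩
        rcases hcover i with ⟨k, hk⟩ | ⟨k, hk⟩
        · subst hk
          have hmem : χ (σ₁ k) ∈ M₁ := by
            rw [hM₁def]
            exact N₁.le_orthogonal_orthogonal (hχσ₁N₁ k)
          exact Submodule.inner_right_of_mem_orthogonal hmem hb
        · subst hk
          have hi1 : ⟪χ (σ₂ k), m⟫_ℂ = 0 :=
            Submodule.inner_right_of_mem_orthogonal (hχσ₂N k) hmN
          have haM₁ : a ∈ (N₁ᗮ)ᗮ := by rw [← hM₁def]; exact ha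
          have hi2 : ⟪χ (σ₂ k), a⟫_ℂ = 0 :=
            Submodule.inner_right_of_mem_orthogonal (hχσ₂N₁orth k) haM₁
          rw [hba, inner_sub_right, hi1, hi2, sub_zero]
      have hb0 : b = 0 :=
        inner_self_eq_zero.mp (Submodule.inner_right_of_mem_orthogonal hbM hbMperp)
      rw [hab, hb0, add_zero]
      exact ha
    have hiso : Isometry ⇑S := AddMonoidHomClass.isometry_of_norm S hSnorm
    have hclosed : IsClosed (Set.range ⇑S) := hiso.isClosedEmbedding.isClosed_range
    have hle : N₁ ≤ LinearMap.range (S : H →ₗ[ℂ] H) := by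
      rw [hN₁def, Submodule.span_le]
      rintro _ ⟨i, rfl⟩
      exact ⟨χ i, hSχ i⟩
    have hM₁le : M₁ ≤ LinearMap.range (S : H →ₗ[ℂ] H) := by
      rw [hM₁def, Submodule.orthogonal_orthogonal_eq_closure]
      exact Submodule.topologicalClosure_minimal _ hle (by exact hclosed)
    obtain ⟨u, hu⟩ := hM₁le hmM₁
    exact ⟨u + m', by rw [map_add, show S u = m from hu, hSfix m' hm', hxd]⟩
  have hrange : Set.range ⇑S = ((Nᗮ : Submodule ℂ H) : Set H) := by
    apply Set.eq_of_subset_of_subset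
    · rintro _ ⟨ξ, rfl⟩; exact hSsub ξ
    · intro x hx
      obtain ⟨u, hu⟩ := hSsup x hx
      exact ⟨u, hu⟩
  refine ⟨hS1, hT1, hrange, ?_⟩
  -- final Cuntz relation
  ext ξ
  obtain ⟨a, ha, b, hb, rfl⟩ := (Nᗮ).exists_add_mem_mem_orthogonal ξ
  obtain ⟨u, hu⟩ := hSsup a ha
  obtain ⟨w, hw⟩ := hNrangeT b hb
  have hSadj : (star S) (S u) = u := by
    have := ContinuousLinearMap.ext_iff.mp hS1 u
    simpa [ContinuousLinearMap.mul_apply] using this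
  have hTadj : (star T) (T w) = w := by
    have := ContinuousLinearMap.ext_iff.mp hT1 w
    simpa [ContinuousLinearMap.mul_apply] using this
  have hSa : S ((star S) a) = a := by rw [← hu, hSadj]
  have hTb : T ((star T) b) = b := by rw [← hw, hTadj]
  have hSb : (star S) b = 0 := by
    apply ext_inner_left ℂ
    intro v
    rw [ContinuousLinearMap.star_eq_adjoint, ContinuousLinearMap.adjoint_inner_right,
      inner_zero_right]
    exact Submodule.inner_right_of_mem_orthogonal (hSsub v) hb
  have hTa : (star T) a = 0 := by
    apply ext_inner_left ℂ
    intro v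
    rw [ContinuousLinearMap.star_eq_adjoint, ContinuousLinearMap.adjoint_inner_right,
      inner_zero_right]
    have ha' : a ∈ Nᗮᗮᗮ := by rw [Submodule.triorthogonal_eq_orthogonal]; exact ha
    exact Submodule.inner_right_of_mem_orthogonal (hTN v) ha'
  simp only [ContinuousLinearMap.add_apply, ContinuousLinearMap.mul_apply, map_add,
    ContinuousLinearMap.one_apply, hSb, hTa, map_zero, hSa, hTb]
  abel
end
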